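/- Let b, c ∈ ℂ with |b| ≤ 1, |c| ≤ 1, set m = |4b − 2c| and n = |2c|, and assume m ≤ 2. Let ρ₁₀ be the smallest root in (0,1) of the equation (1 − e) + 2(m+n) r + (12 + 8e + 3 m n + e·m n) r² + (10 + 8e)(m+n) r³ + (22 + 22e + 6 m n + 6e·m n) r⁴ + (10 + 12e)(m+n) r⁵ + (12 + 16e + 3 m n + 5e·m n) r⁶ + (2 + 4e)(m+n) r⁷ + (1 + 3e) r⁸ = 0, where e is Euler's number (such a root exists). Then for every f ∈ K²_{b,c} and every z ∈ ℂ with 0 < |z| < ρ₁₀, writing w = z·f'(z)/f(z), one has |log(w/(2 − w))| < 1, where log denotes the principal branch of the complex logarithm. (That is, ρ₁₀ is the radius of sigmoid starlikeness for the class K²_{b,c}.) -/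

import Mathlib

open Complex Real

open Metric

set_option maxHeartbeats 2000000

noncomputable def Complex.abs : AbsoluteValue ℂ ℝ :=
  IsAbsoluteValue.toAbsoluteValue (norm : ℂ → ℝ)

lemma Complex.norm_eq_abs (z : ℂ) : ‖z‖ = Complex.abs z := rfl

lemma Complex.sq_abs (z : ℂ) : Complex.abs z ^ 2 = normSq z := Complex.sq_norm z

lemma Complex.abs_apply (z : ℂ) : Complex.abs z = Real.sqrt (normSq z) := Complex.norm_def z

lemma Complex.abs_re_le_abs (z : ℂ) : |z.re| ≤ Complex.abs z := Complex.abs_re_le_norm z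

lemma Complex.abs_conj (z : ℂ) : Complex.abs ((starRingEnd ℂ) z) = Complex.abs z :=
  Complex.norm_conj z

@[simp] lemma Complex.abs_two : Complex.abs 2 = 2 := by
  rw [← Complex.norm_eq_abs]; norm_num

lemma Complex.abs_ofReal (r : ℝ) : Complex.abs (r : ℂ) = |r| := by
  rw [← Complex.norm_eq_abs, Complex.norm_real, Real.norm_eq_abs]

lemma Complex.abs_le_abs_of_mapsTo_ball_self {f : ℂ → ℂ} {R : ℝ} {z : ℂ}
    (hd : DifferentiableOn ℂ f (ball 0 R)) (h_maps : Set.MapsTo f (ball 0 R) (ball 0 R))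
    (h₀ : f 0 = 0) (hz : Complex.abs z < R) : Complex.abs (f z) ≤ Complex.abs z :=
  Complex.norm_le_norm_of_mapsTo_ball hd (h_maps.mono_right ball_subset_closedBall) h₀ hz

lemma Complex.abs_deriv_le_one_of_mapsTo_ball {f : ℂ → ℂ} {c : ℂ} {R : ℝ}
    (hd : DifferentiableOn ℂ f (ball c R)) (h_maps : Set.MapsTo f (ball c R) (ball c R))
    (hc : f c = c) (h₀ : 0 < R) : Complex.abs (deriv f c) ≤ 1 := by
  have := Complex.norm_deriv_le_one_of_mapsTo_ball hd
    (by rw [hc]; exact h_maps.mono_right ball_subset_closedBall) h₀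
  exact this

lemma normSq_expand_sub (u v : ℂ) :
    normSq (v - u) = normSq v + normSq u - 2 * ((starRingEnd ℂ) u * v).re := by
  rw [normSq_sub, mul_comm v]

lemma normSq_expand_mob (u v : ℂ) :
    normSq (1 - (starRingEnd ℂ) u * v)
      = 1 + normSq u * normSq v - 2 * ((starRingEnd ℂ) u * v).re := by
  rw [normSq_sub]
  simp [normSq_mul, normSq_conj]

lemma mobius_strict {u v : ℂ} (hu : Complex.abs u < 1) (hv : Complex.abs v < 1) :
    Complex.abs (v - u) < Complex.abs (1 - (starRingEnd ℂ) u * v) := by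
  have h1 : normSq (v - u) < normSq (1 - (starRingEnd ℂ) u * v) := by
    have hu2 : normSq u < 1 := by rw [← Complex.sq_abs]; nlinarith [Complex.abs.nonneg u]
    have hv2 : normSq v < 1 := by rw [← Complex.sq_abs]; nlinarith [Complex.abs.nonneg v]
    rw [normSq_expand_sub, normSq_expand_mob]; nlinarith
  have := Real.sqrt_lt_sqrt (normSq_nonneg _) h1
  rwa [← Complex.abs_apply, ← Complex.abs_apply] at this

lemma re_conj_mul (u v : ℂ) : (u * (starRingEnd ℂ) v).re = ((starRingEnd ℂ) u * v).re := by
  rw [← Complex.conj_re (u * (starRingEnd ℂ) v), map_mul, Complex.conj_conj]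

lemma mobius_upper {u v : ℂ} (hu : Complex.abs u ≤ 1) (hv : Complex.abs v ≤ 1) :
    Complex.abs (u + v) * (1 + Complex.abs u * Complex.abs v)
      ≤ (Complex.abs u + Complex.abs v) * Complex.abs (1 + (starRingEnd ℂ) u * v) := by
  set s : ℝ := Complex.abs u * Complex.abs v with hs
  set t : ℝ := ((starRingEnd ℂ) u * v).re with ht
  have hts : |t| ≤ s := by
    calc |t| ≤ Complex.abs ((starRingEnd ℂ) u * v) := Complex.abs_re_le_abs _
    _ = s := by rw [map_mul, Complex.abs_conj]
  have e1 : normSq (u + v) = normSq u + normSq v + 2 * t := by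
    rw [normSq_add, re_conj_mul]
  have e2 : normSq (1 + (starRingEnd ℂ) u * v) = 1 + s * s + 2 * t := by
    rw [normSq_add]
    simp only [normSq_one, normSq_mul, normSq_conj, one_mul, Complex.conj_re]
    rw [hs]
    have : normSq u * normSq v = (Complex.abs u * Complex.abs v) * (Complex.abs u * Complex.abs v) := by
      rw [← Complex.sq_abs, ← Complex.sq_abs]; ring
    rw [this]
  have hsq : (Complex.abs (u + v) * (1 + s))^2
      ≤ ((Complex.abs u + Complex.abs v) * Complex.abs (1 + (starRingEnd ℂ) u * v))^2 := by
    have h1 : (Complex.abs (u+v))^2 = normSq (u+v) := Complex.sq_abs _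
    have h2 : (Complex.abs (1 + (starRingEnd ℂ) u * v))^2 = normSq _ := Complex.sq_abs _
    have h3 : (Complex.abs u)^2 = normSq u := Complex.sq_abs _
    have h4 : (Complex.abs v)^2 = normSq v := Complex.sq_abs _
    have hA : normSq u + normSq v ≤ 1 + s * s := by
      have : (1 - normSq u) * (1 - normSq v) ≥ 0 := by
        have : normSq u ≤ 1 := by nlinarith [Complex.abs.nonneg u]
        have h5 : normSq v ≤ 1 := by nlinarith [Complex.abs.nonneg v]
        nlinarith
      have hss : s * s = normSq u * normSq v := by
        rw [hs, ← Complex.sq_abs, ← Complex.sq_abs]; ring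
      nlinarith
    have habs : t ≤ s := le_of_abs_le hts
    have hts' : -s ≤ t := neg_le_of_abs_le hts
    have hs0 : 0 ≤ s := mul_nonneg (Complex.abs.nonneg _) (Complex.abs.nonneg _)
    nlinarith [e1, e2, sq_nonneg (Complex.abs u - Complex.abs v), Complex.abs.nonneg (u+v),
      mul_nonneg (Complex.abs.nonneg u) (Complex.abs.nonneg v)]
  have h0 : 0 ≤ Complex.abs (u + v) * (1 + s) := by positivity
  have h0' : 0 ≤ (Complex.abs u + Complex.abs v) * Complex.abs (1 + (starRingEnd ℂ) u * v) := by
    positivity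
  nlinarith

lemma pick_bounds {ψ : ℂ → ℂ} (hψ : AnalyticOnNhd ℂ ψ (ball (0:ℂ) 1))
    (hb : ∀ w ∈ ball (0:ℂ) 1, Complex.abs (ψ w) ≤ 1)
    {z : ℂ} (hz : z ∈ ball (0:ℂ) 1) :
    Complex.abs (ψ z) * (1 + Complex.abs (ψ 0) * Complex.abs z)
        ≤ Complex.abs (ψ 0) + Complex.abs z ∧
    Complex.abs (deriv ψ z) * (1 - (Complex.abs z)^2) ≤ 1 - (Complex.abs (ψ z))^2 := by
  have h0 : (0:ℂ) ∈ ball (0:ℂ) 1 := mem_ball_self one_pos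
  have ha1 : Complex.abs (ψ 0) ≤ 1 := hb 0 h0
  have hsz : Complex.abs (ψ z) ≤ 1 := hb z hz
  have hr : Complex.abs z < 1 := mem_ball_zero_iff.mp hz
  have hr0 : (0:ℝ) ≤ Complex.abs z := Complex.abs.nonneg z
  have hdiff : DifferentiableOn ℂ ψ (ball (0:ℂ) 1) := hψ.differentiableOn
  by_cases hcase : ∃ w ∈ ball (0:ℂ) 1, 1 ≤ Complex.abs (ψ w)
  · -- maximum modulus: ψ is constant
    obtain ⟨w₀, hw₀, h1⟩ := hcase
    have hmax : IsMaxOn (norm ∘ ψ) (ball (0:ℂ) 1) w₀ := by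
      intro w hw
      simp only [Function.comp_apply, Complex.norm_eq_abs]
      exact le_trans (hb w hw) h1
    have hconst := Complex.eqOn_of_isPreconnected_of_isMaxOn_norm
      (convex_ball (0:ℂ) 1).isPreconnected isOpen_ball hdiff hw₀ hmax
    have hz' : ψ z = ψ w₀ := hconst hz
    have h0' : ψ 0 = ψ w₀ := hconst h0
    have hder : deriv ψ z = 0 := by
      have hev : ψ =ᶠ[nhds z] (fun _ => ψ w₀) :=
        Filter.eventuallyEq_of_mem (isOpen_ball.mem_nhds hz) hconst
      rw [hev.deriv_eq, deriv_const]
    have heq : Complex.abs (ψ w₀) = 1 := le_antisymm (hb w₀ hw₀) h1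
    constructor
    · rw [hz', h0', heq]
      nlinarith [hr0]
    · rw [hder]
      simp only [map_zero, zero_mul]
      nlinarith [hb z hz, Complex.abs.nonneg (ψ z)]
  · push_neg at hcase
    have hB : ∀ w ∈ ball (0:ℂ) 1, Complex.abs (ψ w) < 1 := hcase
    have hvz : Complex.abs (ψ z) < 1 := hB z hz
    have ha : Complex.abs (ψ 0) < 1 := hB 0 h0
    constructor
    · -- first bound via Schwarz
      set u := ψ 0 with hu
      set φ : ℂ → ℂ := fun w => (ψ w - u) / (1 - (starRingEnd ℂ) u * ψ w) with hφ
      have hden : ∀ w ∈ ball (0:ℂ) 1, 1 - (starRingEnd ℂ) u * ψ w ≠ 0 := by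
        intro w hw
        have : Complex.abs ((starRingEnd ℂ) u * ψ w) < 1 := by
          rw [map_mul, Complex.abs_conj]
          calc Complex.abs u * Complex.abs (ψ w) ≤ 1 * Complex.abs (ψ w) := by
                apply mul_le_mul_of_nonneg_right ha.le (Complex.abs.nonneg _)
          _ < 1 := by rw [one_mul]; exact hB w hw
        intro hcontra
        rw [sub_eq_zero] at hcontra
        rw [← hcontra] at this
        simp at this
      have hφd : DifferentiableOn ℂ φ (ball (0:ℂ) 1) := by
        apply DifferentiableOn.div
        · exact hdiff.sub (differentiableOn_const _)
        · exact (differentiableOn_const _).sub ((differentiableOn_const _).mul hdiff)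
        · exact hden
      have hφm : Set.MapsTo φ (ball (0:ℂ) 1) (ball (0:ℂ) 1) := by
        intro w hw
        rw [mem_ball_zero_iff]
        show Complex.abs ((ψ w - u) / (1 - (starRingEnd ℂ) u * ψ w)) < 1
        rw [map_div₀, div_lt_one (by
          have := mobius_strict ha (hB w hw)
          have h2 := Complex.abs.nonneg (ψ w - u)
          linarith)]
        exact mobius_strict ha (hB w hw)
      have hφ0 : φ 0 = 0 := by
        show (ψ 0 - u) / (1 - (starRingEnd ℂ) u * ψ 0) = 0
        rw [← hu, sub_self, zero_div]
      have habs : Complex.abs (φ z) ≤ Complex.abs z :=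
        Complex.abs_le_abs_of_mapsTo_ball_self hφd hφm hφ0 hr
      -- recover ψ z
      have hφz1 : Complex.abs ((starRingEnd ℂ) u * φ z) < 1 := by
        rw [map_mul, Complex.abs_conj]
        have h1 : Complex.abs (φ z) < 1 := mem_ball_zero_iff.mp (hφm hz)
        nlinarith [Complex.abs.nonneg u, Complex.abs.nonneg (φ z)]
      have hden2 : (1 : ℂ) + (starRingEnd ℂ) u * φ z ≠ 0 := by
        intro hcontra
        have : (starRingEnd ℂ) u * φ z = -1 := by linear_combination hcontra
        rw [this] at hφz1
        simp at hφz1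
      have hkey : ψ z * (1 + (starRingEnd ℂ) u * φ z) = u + φ z := by
        show ψ z * (1 + (starRingEnd ℂ) u * ((ψ z - u) / (1 - (starRingEnd ℂ) u * ψ z)))
          = u + (ψ z - u) / (1 - (starRingEnd ℂ) u * ψ z)
        have hd' : (1:ℂ) - ψ z * (starRingEnd ℂ) u ≠ 0 := by rw [mul_comm]; exact hden z hz
        field_simp [hden z hz, hd']
        ring
      have hineq := mobius_upper ha.le (le_trans habs hr.le)
      -- abs (ψ z) * abs (1 + ū φ z) = abs (u + φ z)
      have habs2 : Complex.abs (ψ z) * Complex.abs (1 + (starRingEnd ℂ) u * φ z)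
          = Complex.abs (u + φ z) := by
        rw [← map_mul, hkey]
      have hposd : 0 < Complex.abs (1 + (starRingEnd ℂ) u * φ z) :=
        Complex.abs.pos hden2
      -- from mobius_upper: abs(u+φz)(1+a|φz|) ≤ (a+|φz|) abs(1+ūφz)
      have step : Complex.abs (ψ z) * (1 + Complex.abs u * Complex.abs (φ z))
          ≤ Complex.abs u + Complex.abs (φ z) := by
        rw [← habs2] at hineq
        nlinarith [hineq, hposd]
      nlinarith [step, habs, hsz, ha1, hr0, Complex.abs.nonneg u, Complex.abs.nonneg (φ z),
        mul_nonneg (mul_nonneg (sub_nonneg.mpr hsz) (Complex.abs.nonneg u)) (sub_nonneg.mpr habs),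
        mul_nonneg (sub_nonneg.mpr ha1) (sub_nonneg.mpr habs)]
    · -- derivative bound
      set v := ψ z with hv
      set T : ℂ → ℂ := fun w => (w + z) / (1 + (starRingEnd ℂ) z * w) with hT
      have hTden : ∀ w ∈ ball (0:ℂ) 1, (1:ℂ) + (starRingEnd ℂ) z * w ≠ 0 := by
        intro w hw
        have hw1 : Complex.abs w < 1 := mem_ball_zero_iff.mp hw
        have : Complex.abs ((starRingEnd ℂ) z * w) < 1 := by
          rw [map_mul, Complex.abs_conj]
          nlinarith [Complex.abs.nonneg z, Complex.abs.nonneg w]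
        intro hcontra
        have h2 : (starRingEnd ℂ) z * w = -1 := by linear_combination hcontra
        rw [h2] at this; simp at this
      have hTmaps : Set.MapsTo T (ball (0:ℂ) 1) (ball (0:ℂ) 1) := by
        intro w hw
        have hw1 : Complex.abs w < 1 := mem_ball_zero_iff.mp hw
        rw [mem_ball_zero_iff]
        show Complex.abs ((w + z) / (1 + (starRingEnd ℂ) z * w)) < 1
        rw [map_div₀]
        have hms : Complex.abs (w - -z) < Complex.abs (1 - (starRingEnd ℂ) (-z) * w) :=
          mobius_strict (by simpa using hr) hw1
        simp only [sub_neg_eq_add, map_neg, neg_mul, sub_neg_eq_add] at hms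
        rw [div_lt_one (by
          have h2 := Complex.abs.nonneg (w + z)
          linarith)]
        linarith [hms]
      have hT0 : T 0 = z := by
        show (0 + z) / (1 + (starRingEnd ℂ) z * 0) = z
        simp
      have hTd : DifferentiableOn ℂ T (ball (0:ℂ) 1) := by
        apply DifferentiableOn.div
        · exact (differentiableOn_id).add_const _
        · exact (differentiableOn_const _).add ((differentiableOn_const _).mul differentiableOn_id)
        · exact hTden
      have hTderiv : HasDerivAt T (1 - z * (starRingEnd ℂ) z) 0 := by
        have h1 : HasDerivAt (fun w : ℂ => w + z) 1 0 := (hasDerivAt_id 0).add_const z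
        have h2 : HasDerivAt (fun w : ℂ => 1 + (starRingEnd ℂ) z * w) ((starRingEnd ℂ) z) 0 := by
          simpa using ((hasDerivAt_id 0).const_mul ((starRingEnd ℂ) z)).const_add 1
        have h3 := h1.div h2 (by simpa using hTden 0 h0)
        exact h3.congr_deriv (by simp)
      set χ : ℂ → ℂ := fun w => (ψ (T w) - v) / (1 - (starRingEnd ℂ) v * ψ (T w)) with hχ
      have hvden : ∀ w ∈ ball (0:ℂ) 1, (1:ℂ) - (starRingEnd ℂ) v * ψ (T w) ≠ 0 := by
        intro w hw
        have h1 : Complex.abs ((starRingEnd ℂ) v * ψ (T w)) < 1 := by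
          rw [map_mul, Complex.abs_conj]
          nlinarith [Complex.abs.nonneg v, Complex.abs.nonneg (ψ (T w)), hB (T w) (hTmaps hw),
            hb (T w) (hTmaps hw), hvz]
        intro hcontra
        rw [sub_eq_zero] at hcontra
        rw [← hcontra] at h1
        simp at h1
      have hχd : DifferentiableOn ℂ χ (ball (0:ℂ) 1) := by
        apply DifferentiableOn.div
        · exact (hdiff.comp hTd hTmaps).sub (differentiableOn_const _)
        · exact (differentiableOn_const _).sub
            ((differentiableOn_const _).mul (hdiff.comp hTd hTmaps))
        · exact hvden
      have hχm : Set.MapsTo χ (ball (0:ℂ) 1) (ball (0:ℂ) 1) := by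
        intro w hw
        rw [mem_ball_zero_iff]
        show Complex.abs ((ψ (T w) - v) / (1 - (starRingEnd ℂ) v * ψ (T w))) < 1
        have hms := mobius_strict hvz (hB (T w) (hTmaps hw))
        rw [map_div₀, div_lt_one (by
          have h2 := Complex.abs.nonneg (ψ (T w) - v)
          linarith)]
        exact hms
      have hχ0 : χ 0 = 0 := by
        show (ψ (T 0) - v) / (1 - (starRingEnd ℂ) v * ψ (T 0)) = 0
        rw [hT0, ← hv, sub_self, zero_div]
      have hSch : Complex.abs (deriv χ 0) ≤ 1 :=
        Complex.abs_deriv_le_one_of_mapsTo_ball hχd hχm hχ0 one_pos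
      have hψz' : HasDerivAt ψ (deriv ψ z) z := ((hψ z hz).differentiableAt).hasDerivAt
      have hψT0 : HasDerivAt ψ (deriv ψ z) (T 0) := by rw [hT0]; exact hψz'
      have hcomp : HasDerivAt (fun w => ψ (T w)) (deriv ψ z * (1 - z * (starRingEnd ℂ) z)) 0 :=
        HasDerivAt.comp 0 hψT0 hTderiv
      set D := deriv ψ z * (1 - z * (starRingEnd ℂ) z) with hD
      have hnum : HasDerivAt (fun w => ψ (T w) - v) D 0 := hcomp.sub_const v
      have hden' : HasDerivAt (fun w => 1 - (starRingEnd ℂ) v * ψ (T w))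
          (-((starRingEnd ℂ) v * D)) 0 := by
        simpa using (hcomp.const_mul ((starRingEnd ℂ) v)).const_sub 1
      have hd0 : (1:ℂ) - (starRingEnd ℂ) v * ψ (T 0) ≠ 0 := hvden 0 h0
      have hχder := hnum.div hden' hd0
      have hvv : (1:ℂ) - (starRingEnd ℂ) v * v ≠ 0 := by
        have := hd0; rwa [hT0, ← hv] at this
      have hderχ : deriv χ 0 = D / (1 - (starRingEnd ℂ) v * v) := by
        have h5 : deriv χ 0 = _ := hχder.deriv
        rw [h5, hT0, ← hv]
        field_simp
        ring
      -- translate to real inequalities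
      have habsD : Complex.abs D = Complex.abs (deriv ψ z) * (1 - normSq z) := by
        rw [hD, map_mul]
        congr 1
        have : (1:ℂ) - z * (starRingEnd ℂ) z = ((1 - normSq z : ℝ) : ℂ) := by
          rw [Complex.mul_conj]; push_cast; ring
        rw [this, Complex.abs_ofReal, _root_.abs_of_nonneg]
        nlinarith [Complex.sq_abs z, hr, hr0]
      have habsV : Complex.abs (1 - (starRingEnd ℂ) v * v) = 1 - normSq v := by
        have : (1:ℂ) - (starRingEnd ℂ) v * v = ((1 - normSq v : ℝ) : ℂ) := by
          rw [mul_comm, Complex.mul_conj]; push_cast; ring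
        rw [this, Complex.abs_ofReal, _root_.abs_of_nonneg]
        nlinarith [Complex.sq_abs v, hvz, Complex.abs.nonneg v]
      have hfin : Complex.abs (deriv ψ z) * (1 - normSq z) ≤ 1 - normSq v := by
        rw [hderχ, map_div₀, habsD, habsV, div_le_one (by
          nlinarith [Complex.sq_abs v, hvz, Complex.abs.nonneg v])] at hSch
        linarith [hSch]
      calc Complex.abs (deriv ψ z) * (1 - (Complex.abs z)^2)
          = Complex.abs (deriv ψ z) * (1 - normSq z) := by rw [Complex.sq_abs]
        _ ≤ 1 - normSq v := hfin
        _ = 1 - (Complex.abs v)^2 := by rw [Complex.sq_abs]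

lemma analyticOnNhd_dslope {f : ℂ → ℂ} (hf : AnalyticOnNhd ℂ f (ball (0:ℂ) 1)) :
    AnalyticOnNhd ℂ (dslope f 0) (ball (0:ℂ) 1) := by
  intro w hw
  rcases eq_or_ne w 0 with rfl | hw0
  · obtain ⟨p, hp⟩ := hf 0 hw
    exact hp.has_fpower_series_dslope_fslope.analyticAt
  · have h1 : AnalyticAt ℂ (fun x : ℂ => (x - 0)⁻¹ • (f x - f 0)) w := by
      apply AnalyticAt.fun_smul
      · exact ((analyticAt_id.sub analyticAt_const).inv (by simpa using hw0))
      · exact (hf w hw).sub analyticAt_const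
    apply h1.congr
    filter_upwards [isOpen_ne.mem_nhds hw0] with x hx
    rw [dslope_of_ne _ hx, slope_def_module]

lemma real_chain {A dψ s r M : ℝ} (hr0 : 0 ≤ r) (hr1 : r < 1) (hs0 : 0 ≤ s) (hs1 : s ≤ 1)
    (hM0 : 0 ≤ M) (hA : 0 ≤ A) (hd0 : 0 ≤ dψ)
    (h1 : A * (1 - r^2*s^2) ≤ 2*r*(s + r*dψ))
    (h2 : dψ * (1 - r^2) ≤ 1 - s^2)
    (h3 : s * (1 + (M/2)*r) ≤ M/2 + r) :
    A * ((1-r^2)*(1+M*r+r^2)) ≤ r*(M+4*r+M*r^2) := by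
  have hrs : 0 < 1 - r*s := by nlinarith
  have hrs' : 0 < 1 + r*s := by nlinarith [mul_nonneg hr0 hs0]
  have hr2 : 0 < 1 - r^2 := by nlinarith
  have e1 : A * (1 - r^2*s^2) * (1 - r^2) ≤ 2*r*(r+s)*(1-r*s) := by
    nlinarith [mul_le_mul_of_nonneg_right h1 hr2.le,
      mul_le_mul_of_nonneg_left h2 (by positivity : (0:ℝ) ≤ 2*r^2)]
  have step1 : A * (1 + r*s) * (1 - r^2) ≤ 2*r*(r+s) := by
    nlinarith [e1, hrs, mul_pos hrs hrs']
  -- (1+rs)·G2 = (1+Mr+r²)·X + r(1−r²)·Y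
  have hX : 0 ≤ 2*r*(r+s) - A*(1+r*s)*(1-r^2) := by linarith
  have hY : 0 ≤ (M + 2*r) - s*(2+M*r) := by linarith
  nlinarith [mul_nonneg (by positivity : (0:ℝ) ≤ 1+M*r+r^2) hX,
    mul_nonneg (mul_nonneg hr0 hr2.le) hY, hrs']

lemma carath_bound {h : ℂ → ℂ} (hh : AnalyticOnNhd ℂ h (ball (0:ℂ) 1))
    (h0 : h 0 = 1) (hre : ∀ w ∈ ball (0:ℂ) 1, 0 < (h w).re)
    {z : ℂ} (hz : z ∈ ball (0:ℂ) 1) :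
    Complex.abs (z * deriv h z / h z)
        * ((1 - (Complex.abs z)^2) * (1 + Complex.abs (deriv h 0) * Complex.abs z
            + (Complex.abs z)^2))
      ≤ Complex.abs z * (Complex.abs (deriv h 0) + 4 * Complex.abs z
          + Complex.abs (deriv h 0) * (Complex.abs z)^2) := by
  have h00 : (0:ℂ) ∈ ball (0:ℂ) 1 := mem_ball_self one_pos
  have hr : Complex.abs z < 1 := mem_ball_zero_iff.mp hz
  have hr0 : (0:ℝ) ≤ Complex.abs z := Complex.abs.nonneg z
  have hne : ∀ w ∈ ball (0:ℂ) 1, h w + 1 ≠ 0 := by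
    intro w hw hcontra
    have : (h w + 1).re = 0 := by rw [hcontra]; simp
    rw [Complex.add_re, Complex.one_re] at this
    nlinarith [hre w hw]
  have hh0 : ∀ w ∈ ball (0:ℂ) 1, h w ≠ 0 := by
    intro w hw hcontra
    have := hre w hw
    rw [hcontra] at this
    simp at this
  set ω : ℂ → ℂ := fun w => (h w - 1) / (h w + 1) with hω
  have hωa : AnalyticOnNhd ℂ ω (ball (0:ℂ) 1) := by
    intro w hw
    exact ((hh w hw).sub analyticAt_const).div ((hh w hw).add analyticAt_const) (hne w hw)
  have hω0 : ω 0 = 0 := by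
    show (h 0 - 1) / (h 0 + 1) = 0
    rw [h0]; simp
  have hωlt : ∀ w ∈ ball (0:ℂ) 1, Complex.abs (ω w) < 1 := by
    intro w hw
    show Complex.abs ((h w - 1) / (h w + 1)) < 1
    rw [map_div₀, div_lt_one (Complex.abs.pos (hne w hw))]
    have hlt : normSq (h w - 1) < normSq (h w + 1) := by
      rw [normSq_sub, normSq_add]
      simp only [normSq_one, map_one, mul_one, Complex.conj_re]
      nlinarith [hre w hw]
    have := Real.sqrt_lt_sqrt (normSq_nonneg _) hlt
    rwa [← Complex.abs_apply, ← Complex.abs_apply] at this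
  set ψ := dslope ω 0 with hψdef
  have hψa : AnalyticOnNhd ℂ ψ (ball (0:ℂ) 1) := analyticOnNhd_dslope hωa
  have hωψ : ∀ w, ω w = w * ψ w := by
    intro w
    have := sub_smul_dslope ω 0 w
    rw [sub_zero, smul_eq_mul, hω0, sub_zero] at this
    rw [← this, hψdef]
  have hψle : ∀ w ∈ ball (0:ℂ) 1, Complex.abs (ψ w) ≤ 1 := by
    intro w hw
    have hmaps : Set.MapsTo ω (ball (0:ℂ) 1) (ball (ω 0) 1) := by
      rw [hω0]
      intro x hx
      rw [mem_ball_zero_iff]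
      exact hωlt x hx
    have := Complex.norm_dslope_le_div_of_mapsTo_ball hωa.differentiableOn
      (hmaps.mono_right ball_subset_closedBall) hw
    simpa [Complex.norm_eq_abs] using this
  -- ψ 0 = deriv h 0 / 2
  have hhd : DifferentiableAt ℂ h 0 := (hh 0 h00).differentiableAt
  have hωder0 : HasDerivAt ω (deriv h 0 / 2) 0 := by
    have hd := hhd.hasDerivAt
    have := (hd.sub_const 1).div (hd.add_const 1) (hne 0 h00)
    refine this.congr_deriv ?_
    rw [h0]
    norm_num
    ring
  have hψ0 : ψ 0 = deriv h 0 / 2 := by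
    rw [hψdef, dslope_same]
    exact hωder0.deriv
  have hψ0abs : Complex.abs (ψ 0) = Complex.abs (deriv h 0) / 2 := by
    rw [hψ0, map_div₀]
    norm_num
  obtain ⟨P1, P2⟩ := pick_bounds hψa hψle hz
  -- derivative identities at z
  have hψdz : DifferentiableAt ℂ ψ z := (hψa z hz).differentiableAt
  have hωfun : ω = fun w => w * ψ w := funext hωψ
  have hωderz : HasDerivAt ω (ψ z + z * deriv ψ z) z := by
    rw [hωfun]
    have := (hasDerivAt_id z).mul hψdz.hasDerivAt
    exact this.congr_deriv (by simp)
  have hhdz : DifferentiableAt ℂ h z := (hh z hz).differentiableAt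
  have hωderz' : HasDerivAt ω
      ((deriv h z * (h z + 1) - (h z - 1) * deriv h z) / (h z + 1)^2) z :=
    (hhdz.hasDerivAt.sub_const 1).div (hhdz.hasDerivAt.add_const 1) (hne z hz)
  have hdd : ψ z + z * deriv ψ z
      = (deriv h z * (h z + 1) - (h z - 1) * deriv h z) / (h z + 1)^2 := by
    rw [← hωderz.deriv, ← hωderz'.deriv]
  -- main identity : Q * (1 - ω z ^ 2) = 2 * z * (deriv ω z)
  have hkey : z * deriv h z / h z * (1 - (ω z)^2) = 2 * z * (ψ z + z * deriv ψ z) := by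
    rw [hdd]
    show z * deriv h z / h z * (1 - ((h z - 1)/(h z + 1))^2) = _
    field_simp [hh0 z hz, hne z hz]
    ring
  -- bound abs (1 - ω z ^ 2) from below
  set r := Complex.abs z with hrdef
  set s := Complex.abs (ψ z) with hsdef
  have hωzabs : Complex.abs (ω z) = r * s := by rw [hωψ z, map_mul]
  have hlow : 1 - r^2 * s^2 ≤ Complex.abs (1 - (ω z)^2) := by
    have htri : Complex.abs (1 : ℂ) ≤ Complex.abs (1 - (ω z)^2) + Complex.abs ((ω z)^2) := by
      calc Complex.abs (1:ℂ) = Complex.abs ((1 - (ω z)^2) + (ω z)^2) := by ring_nf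
      _ ≤ _ := Complex.abs.add_le _ _
    rw [map_one, map_pow, hωzabs] at htri
    nlinarith [htri]
  set A := Complex.abs (z * deriv h z / h z) with hAdef
  have habskey : A * Complex.abs (1 - (ω z)^2)
      = 2 * r * Complex.abs (ψ z + z * deriv ψ z) := by
    rw [hAdef, ← map_mul, hkey, map_mul, map_mul]
    simp [hrdef]
  have htri2 : Complex.abs (ψ z + z * deriv ψ z) ≤ s + r * Complex.abs (deriv ψ z) := by
    calc Complex.abs (ψ z + z * deriv ψ z)
        ≤ Complex.abs (ψ z) + Complex.abs (z * deriv ψ z) := Complex.abs.add_le _ _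
      _ = s + r * Complex.abs (deriv ψ z) := by rw [map_mul, hsdef, hrdef]
  have h1 : A * (1 - r^2*s^2) ≤ 2*r*(s + r*(Complex.abs (deriv ψ z))) := by
    calc A * (1 - r^2*s^2) ≤ A * Complex.abs (1 - (ω z)^2) := by
          apply mul_le_mul_of_nonneg_left hlow (Complex.abs.nonneg _)
      _ = 2 * r * Complex.abs (ψ z + z * deriv ψ z) := habskey
      _ ≤ 2*r*(s + r*(Complex.abs (deriv ψ z))) := by
          apply mul_le_mul_of_nonneg_left htri2 (by positivity)
  have hM2 : Complex.abs (deriv h 0) = 2 * Complex.abs (ψ 0) := by rw [hψ0abs]; ring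
  apply real_chain hr0 hr (Complex.abs.nonneg _) (hψle z hz) (Complex.abs.nonneg _)
    (Complex.abs.nonneg _) (Complex.abs.nonneg _) h1 P2
  rw [hM2]
  have : Complex.abs (ψ 0) * 2 / 2 = Complex.abs (ψ 0) := by ring
  calc s * (1 + 2 * Complex.abs (ψ 0) / 2 * r) = s * (1 + Complex.abs (ψ 0) * r) := by ring_nf
    _ ≤ Complex.abs (ψ 0) + r := P1
    _ = 2 * Complex.abs (ψ 0) / 2 + r := by ring

lemma log_sg {u : ℂ} (hu : Complex.abs u < (Real.exp 1 - 1)/(Real.exp 1 + 1)) :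
    Complex.abs (Complex.log ((1+u)/(1-u))) < 1 := by
  have he : 1 < Real.exp 1 := by
    have := Real.add_one_lt_exp (x := 1) one_ne_zero
    linarith
  set t := Complex.abs u with htdef
  have ht0 : 0 ≤ t := Complex.abs.nonneg u
  have hτ1 : (Real.exp 1 - 1)/(Real.exp 1 + 1) < 1 := by
    rw [div_lt_one (by linarith)]; linarith
  have ht1 : t < 1 := lt_trans hu hτ1
  have hre1 : 0 < (1 + u).re := by
    rw [Complex.add_re, Complex.one_re]
    have := Complex.abs_re_le_abs u
    have h2 := neg_le_of_abs_le this
    linarith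
  have hre2 : 0 < (1 - u).re := by
    rw [Complex.sub_re, Complex.one_re]
    have := Complex.abs_re_le_abs u
    have h2 := le_of_abs_le this
    linarith
  have hne1 : (1 + u) ≠ 0 := fun hc => by rw [hc] at hre1; simp at hre1
  have hne2 : (1 - u) ≠ 0 := fun hc => by rw [hc] at hre2; simp at hre2
  -- log of quotient
  set L := Complex.log (1+u) - Complex.log (1-u) with hLdef
  have harg1 : |Complex.arg (1+u)| < Real.pi/2 :=
    Complex.abs_arg_lt_pi_div_two_iff.mpr (Or.inl hre1)
  have harg2 : |Complex.arg (1-u)| < Real.pi/2 :=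
    Complex.abs_arg_lt_pi_div_two_iff.mpr (Or.inl hre2)
  have hLim : -Real.pi < L.im ∧ L.im ≤ Real.pi := by
    rw [hLdef, Complex.sub_im, Complex.log_im, Complex.log_im]
    rw [abs_lt] at harg1 harg2
    have hπ : 0 < Real.pi := Real.pi_pos
    constructor <;> [linarith [harg1.1, harg2.2]; linarith [harg1.2, harg2.1]]
  have hlogeq : Complex.log ((1+u)/(1-u)) = L := by
    have hexp : Complex.exp L = (1+u)/(1-u) := by
      rw [hLdef, Complex.exp_sub, Complex.exp_log hne1, Complex.exp_log hne2]
    rw [← hexp, Complex.log_exp hLim.1 hLim.2]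
  rw [hlogeq]
  -- series bound
  have hu1 : ‖u‖ < 1 := by rwa [Complex.norm_eq_abs]
  have S1 := Complex.hasSum_taylorSeries_log hu1
  have S2 := Complex.hasSum_taylorSeries_neg_log hu1
  have S : HasSum (fun n : ℕ => (-1)^(n+1) * u^n/n + u^n/n) L := by
    have h := S1.add S2
    rw [hLdef, sub_eq_add_neg]
    exact h
  -- the real comparison series
  have hT1 : |t| < 1 := by rwa [_root_.abs_of_nonneg ht0]
  have hTn : |(-t)| < 1 := by rwa [abs_neg]
  have R1 : HasSum (fun n : ℕ => t^n/n) (-Real.log (1-t)) := by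
    have h := Real.hasSum_pow_div_log_of_abs_lt_one hT1
    have h3 : HasSum (fun n : ℕ => (fun m : ℕ => t^m/(m:ℝ)) (n+1))
        ((-Real.log (1-t)) - ∑ i ∈ Finset.range 1, (fun m : ℕ => t^m/(m:ℝ)) i) := by
      simpa using h
    exact (hasSum_nat_add_iff' (f := fun m : ℕ => t^m/(m:ℝ)) 1).mp h3
  have R2 : HasSum (fun n : ℕ => (-t)^n/n) (-Real.log (1+t)) := by
    have h := Real.hasSum_pow_div_log_of_abs_lt_one hTn
    have h3 : HasSum (fun n : ℕ => (fun m : ℕ => (-t)^m/(m:ℝ)) (n+1))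
        ((-Real.log (1+t)) - ∑ i ∈ Finset.range 1, (fun m : ℕ => (-t)^m/(m:ℝ)) i) := by
      have he2 : (1 : ℝ) - -t = 1 + t := by ring
      rw [← he2]
      simpa using h
    exact (hasSum_nat_add_iff' (f := fun m : ℕ => (-t)^m/(m:ℝ)) 1).mp h3
  have Rg : HasSum (fun n : ℕ => t^n/n - (-t)^n/n) (Real.log (1+t) - Real.log (1-t)) := by
    have := R1.sub R2
    rw [show Real.log (1+t) - Real.log (1-t) = -Real.log (1-t) - -Real.log (1+t) by ring]
    exact this
  -- termwise norms
  have hnorm : ∀ n : ℕ, ‖(-1)^(n+1) * u^n/n + u^n/n‖ = t^n/n - (-t)^n/n := by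
    intro n
    rcases Nat.even_or_odd n with he' | ho
    · have h1 : ((-1:ℂ))^(n+1) = -1 := by
        rw [pow_succ, he'.neg_one_pow]; ring
      have h2 : ((-t):ℝ)^n = t^n := he'.neg_pow t
      rw [h1, h2]
      have h3 : (-1:ℂ) * u^n/(n:ℂ) + u^n/(n:ℂ) = 0 := by ring
      rw [h3]
      simp
    · have h1 : ((-1:ℂ))^(n+1) = 1 := by
        rw [pow_succ, ho.neg_one_pow]; ring
      have h2 : ((-t):ℝ)^n = -t^n := ho.neg_pow t
      rw [h1, h2]
      have : (1:ℂ) * u^n/n + u^n/n = 2 * u^n / n := by ring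
      rw [one_mul] at this ⊢
      rw [this]
      rw [norm_div, norm_mul, norm_pow]
      simp [Complex.norm_eq_abs, ← htdef]
      ring
  have hsumnorm : Summable (fun n : ℕ => ‖(-1)^(n+1) * u^n/n + u^n/n‖) := by
    apply Summable.congr Rg.summable
    intro n
    exact (hnorm n).symm
  have hbound : ‖L‖ ≤ Real.log (1+t) - Real.log (1-t) := by
    have h1 := norm_tsum_le_tsum_norm hsumnorm
    rw [S.tsum_eq] at h1
    calc ‖L‖ ≤ ∑' n : ℕ, ‖(-1)^(n+1) * u^n/n + u^n/n‖ := h1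
      _ = ∑' n : ℕ, (t^n/n - (-t)^n/n) := by
          congr 1; funext n; exact hnorm n
      _ = Real.log (1+t) - Real.log (1-t) := Rg.tsum_eq
  rw [Complex.norm_eq_abs] at hbound
  have hfin : Real.log (1+t) - Real.log (1-t) < 1 := by
    rw [← Real.log_div (by linarith) (by linarith)]
    have hlt : (1+t)/(1-t) < Real.exp 1 := by
      rw [div_lt_iff₀ (by linarith)]
      have hu' : t * (Real.exp 1 + 1) < Real.exp 1 - 1 := by
        rwa [lt_div_iff₀ (by linarith : (0:ℝ) < Real.exp 1 + 1)] at hu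
      nlinarith
    calc Real.log ((1+t)/(1-t)) < Real.log (Real.exp 1) :=
          Real.log_lt_log (div_pos (by linarith) (by linarith)) hlt
      _ = 1 := Real.log_exp 1
  linarith

lemma deriv_dslope_zero {f : ℂ → ℂ} (hf : AnalyticAt ℂ f 0) :
    deriv (dslope f 0) 0 = iteratedDeriv 2 f 0 / 2 := by
  obtain ⟨p, hp⟩ := hf
  have h1 : deriv (dslope f 0) 0 = p.fslope.coeff 1 :=
    hp.has_fpower_series_dslope_fslope.deriv
  rw [h1, FormalMultilinearSeries.coeff_fslope]
  obtain ⟨r, hball⟩ := hp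
  have h2 := hball.factorial_smul (1:ℂ) 2
  rw [iteratedDeriv_eq_iteratedFDeriv, ← h2]
  have h3 : (p 2 fun _ => (1:ℂ)) = p.coeff 2 := rfl
  rw [h3, show Nat.factorial 2 = 2 from rfl, nsmul_eq_mul]
  show p.coeff 2 = _
  push_cast
  ring

-- placeholders for already-proven lemmas
set_option maxHeartbeats 2000000 in
theorem stmt_12 (b c : ℂ) (hb : ‖b‖ ≤ 1) (hc : ‖c‖ ≤ 1)
    (m : ℝ) (hm : m = ‖4 * b - 2 * c‖)
    (n : ℝ) (hn : n = ‖2 * c‖)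
    (hm2 : m ≤ 2)
    (f : ℂ → ℂ) (hf : AnalyticOnNhd ℂ f (Metric.ball (0:ℂ) 1))
    (hf0 : f 0 = 0) (hf1 : deriv f 0 = 1)
    (hf2 : iteratedDeriv 2 f 0 / 2 = 4 * b)
    (hg : ∃ g : ℂ → ℂ, AnalyticOnNhd ℂ g (Metric.ball (0:ℂ) 1) ∧
      g 0 = 0 ∧ deriv g 0 = 1 ∧ iteratedDeriv 2 g 0 / 2 = 2 * c ∧
      ∀ z ∈ Metric.ball (0:ℂ) 1, z ≠ 0 →
        0 < (f z / g z).re ∧ 0 < (g z * (1 - z ^ 2) / z).re)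
    (ρ : ℝ) (hρ : ρ ∈ Set.Ioo (0:ℝ) 1)
    (hroot : (1 - (Real.exp 1)) + 2*(m + n)*ρ + (12 + 8*(Real.exp 1) + 3*m*n + (Real.exp 1)*m*n)*ρ^2 + (10 + 8*(Real.exp 1))*(m + n)*ρ^3 + (22 + 22*(Real.exp 1) + 6*m*n + 6*(Real.exp 1)*m*n)*ρ^4 + (10 + 12*(Real.exp 1))*(m + n)*ρ^5 + (12 + 16*(Real.exp 1) + 3*m*n + 5*(Real.exp 1)*m*n)*ρ^6 + (2 + 4*(Real.exp 1))*(m + n)*ρ^7 + (1 + 3*(Real.exp 1))*ρ^8 = 0)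
    (hsmall : ∀ r ∈ Set.Ioo (0:ℝ) 1, (1 - (Real.exp 1)) + 2*(m + n)*r + (12 + 8*(Real.exp 1) + 3*m*n + (Real.exp 1)*m*n)*r^2 + (10 + 8*(Real.exp 1))*(m + n)*r^3 + (22 + 22*(Real.exp 1) + 6*m*n + 6*(Real.exp 1)*m*n)*r^4 + (10 + 12*(Real.exp 1))*(m + n)*r^5 + (12 + 16*(Real.exp 1) + 3*m*n + 5*(Real.exp 1)*m*n)*r^6 + (2 + 4*(Real.exp 1))*(m + n)*r^7 + (1 + 3*(Real.exp 1))*r^8 = 0 → ρ ≤ r) :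
    ∀ z : ℂ, 0 < ‖z‖ → ‖z‖ < ρ →
      ‖Complex.log ((z * deriv f z / f z) /
        (2 - z * deriv f z / f z))‖ < 1 := by
  simp only [Complex.norm_eq_abs] at hb hc hm hn ⊢
  obtain ⟨g, hga, hg0, hg1, hg2, hpos⟩ := hg
  intro z hz0 hzρ
  have hρ1 : ρ < 1 := hρ.2
  have hr1 : Complex.abs z < 1 := lt_trans hzρ hρ1
  have hz1 : z ∈ ball (0:ℂ) 1 := mem_ball_zero_iff.mpr hr1
  have hzne : z ≠ 0 := fun hc' => by rw [hc'] at hz0; simp at hz0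
  have h00 : (0:ℂ) ∈ ball (0:ℂ) 1 := mem_ball_self one_pos
  set r := Complex.abs z with hrdef
  -- basic nonvanishing
  have hw2ne : ∀ w ∈ ball (0:ℂ) 1, (1:ℂ) - w^2 ≠ 0 := by
    intro w hw hc'
    have h1 : Complex.abs (w^2) < 1 := by
      rw [map_pow]
      have hww : Complex.abs w < 1 := mem_ball_zero_iff.mp hw
      nlinarith [hww, Complex.abs.nonneg w]
    rw [sub_eq_zero] at hc'
    rw [← hc'] at h1
    simp at h1
  have hgne : ∀ w ∈ ball (0:ℂ) 1, w ≠ 0 → g w ≠ 0 := by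
    intro w hw hw0 hc'
    have := (hpos w hw hw0).2
    rw [hc'] at this
    simp at this
  -- F and G
  set F := dslope f 0 with hFdef
  set G := dslope g 0 with hGdef
  have hFa : AnalyticOnNhd ℂ F (ball (0:ℂ) 1) := analyticOnNhd_dslope hf
  have hGa : AnalyticOnNhd ℂ G (ball (0:ℂ) 1) := analyticOnNhd_dslope hga
  have hfF : ∀ w, f w = w * F w := by
    intro w
    have := sub_smul_dslope f 0 w
    rw [sub_zero, smul_eq_mul, hf0, sub_zero] at this
    rw [← this]
  have hgG : ∀ w, g w = w * G w := by
    intro w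
    have := sub_smul_dslope g 0 w
    rw [sub_zero, smul_eq_mul, hg0, sub_zero] at this
    rw [← this]
  have hF0 : F 0 = 1 := by rw [hFdef, dslope_same, hf1]
  have hG0 : G 0 = 1 := by rw [hGdef, dslope_same, hg1]
  have hF'0 : deriv F 0 = 4 * b := by rw [hFdef, deriv_dslope_zero (hf 0 h00), hf2]
  have hG'0 : deriv G 0 = 2 * c := by rw [hGdef, deriv_dslope_zero (hga 0 h00), hg2]
  have hGne : ∀ w ∈ ball (0:ℂ) 1, G w ≠ 0 := by
    intro w hw
    rcases eq_or_ne w 0 with rfl | hw0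
    · rw [hG0]; exact one_ne_zero
    · intro hc'
      have := hgG w
      rw [hc', mul_zero] at this
      exact hgne w hw hw0 this
  -- p and q
  set p : ℂ → ℂ := fun w => F w / G w with hpdef
  set q : ℂ → ℂ := fun w => G w * (1 - w^2) with hqdef
  have hpa : AnalyticOnNhd ℂ p (ball (0:ℂ) 1) := fun w hw =>
    (hFa w hw).div (hGa w hw) (hGne w hw)
  have hqa : AnalyticOnNhd ℂ q (ball (0:ℂ) 1) := fun w hw =>
    (hGa w hw).mul (analyticAt_const.sub (analyticAt_id.pow 2))
  have hp0 : p 0 = 1 := by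
    show F 0 / G 0 = 1
    rw [hF0, hG0]; norm_num
  have hq0 : q 0 = 1 := by
    show G 0 * (1 - (0:ℂ)^2) = 1
    rw [hG0]; norm_num
  have hpeq : ∀ w ∈ ball (0:ℂ) 1, w ≠ 0 → p w = f w / g w := by
    intro w hw hw0
    show F w / G w = f w / g w
    rw [hfF w, hgG w, mul_div_mul_left _ _ hw0]
  have hqeq : ∀ w ∈ ball (0:ℂ) 1, w ≠ 0 → q w = g w * (1 - w^2) / w := by
    intro w hw hw0
    show G w * (1 - w^2) = g w * (1 - w^2) / w
    rw [hgG w]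
    field_simp
  have hpre : ∀ w ∈ ball (0:ℂ) 1, 0 < (p w).re := by
    intro w hw
    rcases eq_or_ne w 0 with rfl | hw0
    · rw [hp0]; norm_num
    · rw [hpeq w hw hw0]; exact (hpos w hw hw0).1
  have hqre : ∀ w ∈ ball (0:ℂ) 1, 0 < (q w).re := by
    intro w hw
    rcases eq_or_ne w 0 with rfl | hw0
    · rw [hq0]; norm_num
    · rw [hqeq w hw hw0]; exact (hpos w hw hw0).2
  have hpne : p z ≠ 0 := by
    intro hc'
    have := hpre z hz1
    rw [hc'] at this; simp at this
  have hqne : q z ≠ 0 := by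
    intro hc'
    have := hqre z hz1
    rw [hc'] at this; simp at this
  -- derivatives at 0
  have hp'0 : deriv p 0 = 4*b - 2*c := by
    have hd := ((hFa 0 h00).differentiableAt.hasDerivAt).div
      ((hGa 0 h00).differentiableAt.hasDerivAt) (by rw [hG0]; exact one_ne_zero)
    have := hd.deriv
    rw [hpdef]
    change deriv (F / G) 0 = _
    rw [this, hF0, hG0, hF'0, hG'0]
    norm_num
  have hq'0 : deriv q 0 = 2*c := by
    have hd2 : HasDerivAt (fun w : ℂ => (1:ℂ) - w^2) (-(2*(0:ℂ)^1)) 0 := by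
      have := (hasDerivAt_pow 2 (0:ℂ)).const_sub 1
      norm_num at this ⊢
      exact this
    have hd := ((hGa 0 h00).differentiableAt.hasDerivAt).mul hd2
    have := hd.deriv
    rw [hqdef]
    change deriv (G * fun w : ℂ => (1:ℂ) - w^2) 0 = _
    rw [this, hG0, hG'0]
    norm_num
  have hmabs : Complex.abs (deriv p 0) = m := by rw [hp'0, hm]
  have hnabs : Complex.abs (deriv q 0) = n := by rw [hq'0, hn]
  -- Caratheodory bounds
  have Bp := carath_bound hpa hp0 hpre hz1
  have Bq := carath_bound hqa hq0 hqre hz1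
  rw [hmabs] at Bp
  rw [hnabs] at Bq
  -- decomposition of f
  have hfz_eq : Set.EqOn f (fun w => w * p w * q w / (1 - w^2)) (ball (0:ℂ) 1) := by
    intro w hw
    show f w = w * (F w / G w) * (G w * (1 - w^2)) / (1 - w^2)
    rw [hfF w]
    field_simp [hGne w hw, hw2ne w hw]
  have hfd : deriv f z = deriv (fun w => w * p w * q w / (1 - w^2)) z := by
    apply Filter.EventuallyEq.deriv_eq
    exact Filter.eventuallyEq_of_mem (isOpen_ball.mem_nhds hz1) hfz_eq
  have hpd : HasDerivAt p (deriv p z) z := (hpa z hz1).differentiableAt.hasDerivAt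
  have hqd : HasDerivAt q (deriv q z) z := (hqa z hz1).differentiableAt.hasDerivAt
  have hnum : HasDerivAt (fun w => w * p w * q w)
      ((1 * p z + z * deriv p z) * q z + z * p z * deriv q z) z :=
    (((hasDerivAt_id z).mul hpd).mul hqd)
  have hden : HasDerivAt (fun w : ℂ => (1:ℂ) - w^2) (-(2*z^1)) z := by
    have := (hasDerivAt_pow 2 z).const_sub 1
    norm_num at this ⊢
    exact this
  have hdiv := hnum.div hden (hw2ne z hz1)
  have hfd2 : deriv f z =
      (((1 * p z + z * deriv p z) * q z + z * p z * deriv q z) * (1 - z^2)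
        - z * p z * q z * (-(2*z^1))) / (1 - z^2)^2 := by
    rw [hfd]
    exact hdiv.deriv
  have hfzval : f z = z * p z * q z / (1 - z^2) := hfz_eq hz1
  have hfzne : f z ≠ 0 := by
    rw [hfzval]
    apply div_ne_zero
    · exact mul_ne_zero (mul_ne_zero hzne hpne) hqne
    · exact hw2ne z hz1
  -- main identity
  have hW : z * deriv f z / f z - 1
      = z * deriv p z / p z + z * deriv q z / q z + 2*z^2/(1-z^2) := by
    rw [hfd2, hfzval]
    field_simp [hpne, hqne, hw2ne z hz1, hzne]
    ring
  -- triangle inequality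
  have htri : Complex.abs (z * deriv f z / f z - 1)
      ≤ Complex.abs (z * deriv p z / p z) + Complex.abs (z * deriv q z / q z)
        + Complex.abs (2*z^2/(1-z^2)) := by
    rw [hW]
    calc Complex.abs (z * deriv p z / p z + z * deriv q z / q z + 2*z^2/(1-z^2))
        ≤ Complex.abs (z * deriv p z / p z + z * deriv q z / q z)
          + Complex.abs (2*z^2/(1-z^2)) := Complex.abs.add_le _ _
      _ ≤ _ := by
          have := Complex.abs.add_le (z * deriv p z / p z) (z * deriv q z / q z)
          linarith
  -- bound on the third term
  have hlow2 : 1 - r^2 ≤ Complex.abs (1 - z^2) := by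
    have htr : Complex.abs (1:ℂ) ≤ Complex.abs (1 - z^2) + Complex.abs (z^2) := by
      calc Complex.abs (1:ℂ) = Complex.abs ((1 - z^2) + z^2) := by ring_nf
        _ ≤ _ := Complex.abs.add_le _ _
    rw [map_one, map_pow] at htr
    linarith
  have hD0 : (0:ℝ) < 1 - r^2 := by nlinarith [hr1, Complex.abs.nonneg z]
  have hA0 : Complex.abs (2*z^2/(1-z^2)) * (1 - r^2) ≤ 2*r^2 := by
    rw [map_div₀, map_mul, map_pow]
    have h2 : Complex.abs (2:ℂ) = 2 := by
      simpa using Complex.abs_ofReal 2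
    rw [h2]
    rw [div_mul_eq_mul_div, div_le_iff₀ (lt_of_lt_of_le hD0 hlow2)]
    have := mul_le_mul_of_nonneg_left hlow2 (by positivity : (0:ℝ) ≤ 2 * r^2)
    calc 2 * Complex.abs z ^ 2 * (1 - r^2) ≤ 2 * r^2 * Complex.abs (1 - z^2) := by
          rw [← hrdef]
          nlinarith [this]
      _ = _ := by ring
  -- real facts
  have he1 : 1 < Real.exp 1 := by
    have := Real.add_one_lt_exp (x := 1) one_ne_zero
    linarith
  have hm0 : 0 ≤ m := by rw [hm]; exact Complex.abs.nonneg _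
  have hn0 : 0 ≤ n := by rw [hn]; exact Complex.abs.nonneg _
  have hr0' : 0 ≤ r := Complex.abs.nonneg z
  -- P(r) < 0 via IVT
  have hPneg : (1 - (Real.exp 1)) + 2*(m + n)*r
      + (12 + 8*(Real.exp 1) + 3*m*n + (Real.exp 1)*m*n)*r^2
      + (10 + 8*(Real.exp 1))*(m + n)*r^3
      + (22 + 22*(Real.exp 1) + 6*m*n + 6*(Real.exp 1)*m*n)*r^4
      + (10 + 12*(Real.exp 1))*(m + n)*r^5
      + (12 + 16*(Real.exp 1) + 3*m*n + 5*(Real.exp 1)*m*n)*r^6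
      + (2 + 4*(Real.exp 1))*(m + n)*r^7 + (1 + 3*(Real.exp 1))*r^8 < 0 := by
    by_contra hge
    push_neg at hge
    set Q : ℝ → ℝ := fun x => (1 - (Real.exp 1)) + 2*(m + n)*x
      + (12 + 8*(Real.exp 1) + 3*m*n + (Real.exp 1)*m*n)*x^2
      + (10 + 8*(Real.exp 1))*(m + n)*x^3
      + (22 + 22*(Real.exp 1) + 6*m*n + 6*(Real.exp 1)*m*n)*x^4
      + (10 + 12*(Real.exp 1))*(m + n)*x^5
      + (12 + 16*(Real.exp 1) + 3*m*n + 5*(Real.exp 1)*m*n)*x^6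
      + (2 + 4*(Real.exp 1))*(m + n)*x^7 + (1 + 3*(Real.exp 1))*x^8 with hQdef
    have hQc : Continuous Q := by
      rw [hQdef]; fun_prop
    have hQ0 : Q 0 < 0 := by
      show (1 - (Real.exp 1)) + 2*(m + n)*0
        + (12 + 8*(Real.exp 1) + 3*m*n + (Real.exp 1)*m*n)*0^2
        + (10 + 8*(Real.exp 1))*(m + n)*0^3
        + (22 + 22*(Real.exp 1) + 6*m*n + 6*(Real.exp 1)*m*n)*0^4
        + (10 + 12*(Real.exp 1))*(m + n)*0^5
        + (12 + 16*(Real.exp 1) + 3*m*n + 5*(Real.exp 1)*m*n)*0^6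
        + (2 + 4*(Real.exp 1))*(m + n)*0^7 + (1 + 3*(Real.exp 1))*0^8 < 0
      norm_num [he1]
    have hmem : (0:ℝ) ∈ Set.Icc (Q 0) (Q r) := ⟨le_of_lt hQ0, hge⟩
    obtain ⟨r', hr'mem, hr'val⟩ := intermediate_value_Icc hr0' hQc.continuousOn hmem
    have hr'0 : r' ≠ 0 := by
      rintro rfl
      rw [hr'val] at hQ0
      exact lt_irrefl _ hQ0
    have hρler : ρ ≤ r' := by
      apply hsmall r' ⟨lt_of_le_of_ne hr'mem.1 (Ne.symm hr'0), lt_of_le_of_lt hr'mem.2 hr1⟩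
      exact hr'val
    linarith [hr'mem.2, hzρ]
  -- final real inequality
  have hDp : (0:ℝ) < (1-r^2)*(1+m*r+r^2) := by
    apply mul_pos hD0
    nlinarith [mul_nonneg hm0 hr0', sq_nonneg r]
  have hDq : (0:ℝ) < (1-r^2)*(1+n*r+r^2) := by
    apply mul_pos hD0
    nlinarith [mul_nonneg hn0 hr0', sq_nonneg r]
  have hApX : Complex.abs (z * deriv p z / p z)
      ≤ r*(m+4*r+m*r^2)/((1-r^2)*(1+m*r+r^2)) := by
    rw [le_div_iff₀ hDp]
    exact Bp
  have hAqX : Complex.abs (z * deriv q z / q z)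
      ≤ r*(n+4*r+n*r^2)/((1-r^2)*(1+n*r+r^2)) := by
    rw [le_div_iff₀ hDq]
    exact Bq
  have hA0X : Complex.abs (2*z^2/(1-z^2)) ≤ 2*r^2/(1-r^2) := by
    rw [le_div_iff₀ hD0]
    exact hA0
  have hE1 : (0:ℝ) < Real.exp 1 + 1 := by linarith
  have hXlt : r*(m+4*r+m*r^2)/((1-r^2)*(1+m*r+r^2))
      + r*(n+4*r+n*r^2)/((1-r^2)*(1+n*r+r^2)) + 2*r^2/(1-r^2)
      < (Real.exp 1 - 1)/(Real.exp 1 + 1) := by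
    have hDEN : (0:ℝ) < (1-r^2)^3*((1+m*r+r^2)*(1+n*r+r^2)) := by
      apply mul_pos (pow_pos hD0 3)
      apply mul_pos
      · nlinarith [mul_nonneg hm0 hr0', sq_nonneg r]
      · nlinarith [mul_nonneg hn0 hr0', sq_nonneg r]
    have heq : r*(m+4*r+m*r^2)/((1-r^2)*(1+m*r+r^2))
        + r*(n+4*r+n*r^2)/((1-r^2)*(1+n*r+r^2)) + 2*r^2/(1-r^2)
        = ((1-r^2)^2 * (r*(m+4*r+m*r^2)*(1+n*r+r^2) + r*(n+4*r+n*r^2)*(1+m*r+r^2)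
            + 2*r^2*((1+m*r+r^2)*(1+n*r+r^2))))
          / ((1-r^2)^3*((1+m*r+r^2)*(1+n*r+r^2))) := by
      field_simp
    rw [heq, div_lt_div_iff₀ hDEN hE1]
    have hiden : (1+r^2) * (((1-r^2)^2 * (r*(m+4*r+m*r^2)*(1+n*r+r^2)
          + r*(n+4*r+n*r^2)*(1+m*r+r^2) + 2*r^2*((1+m*r+r^2)*(1+n*r+r^2))))
            * (Real.exp 1 + 1)
          - (Real.exp 1 - 1) * ((1-r^2)^3*((1+m*r+r^2)*(1+n*r+r^2))))
        = (1-r^2)^2 * ((1 - (Real.exp 1)) + 2*(m + n)*r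
          + (12 + 8*(Real.exp 1) + 3*m*n + (Real.exp 1)*m*n)*r^2
          + (10 + 8*(Real.exp 1))*(m + n)*r^3
          + (22 + 22*(Real.exp 1) + 6*m*n + 6*(Real.exp 1)*m*n)*r^4
          + (10 + 12*(Real.exp 1))*(m + n)*r^5
          + (12 + 16*(Real.exp 1) + 3*m*n + 5*(Real.exp 1)*m*n)*r^6
          + (2 + 4*(Real.exp 1))*(m + n)*r^7 + (1 + 3*(Real.exp 1))*r^8) := by
      ring
    have hrhs : (1-r^2)^2 * ((1 - (Real.exp 1)) + 2*(m + n)*r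
          + (12 + 8*(Real.exp 1) + 3*m*n + (Real.exp 1)*m*n)*r^2
          + (10 + 8*(Real.exp 1))*(m + n)*r^3
          + (22 + 22*(Real.exp 1) + 6*m*n + 6*(Real.exp 1)*m*n)*r^4
          + (10 + 12*(Real.exp 1))*(m + n)*r^5
          + (12 + 16*(Real.exp 1) + 3*m*n + 5*(Real.exp 1)*m*n)*r^6
          + (2 + 4*(Real.exp 1))*(m + n)*r^7 + (1 + 3*(Real.exp 1))*r^8) < 0 :=
      mul_neg_of_pos_of_neg (pow_pos hD0 2) hPneg
    nlinarith [hiden, hrhs, sq_nonneg r]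
  have hufinal : Complex.abs (z * deriv f z / f z - 1)
      < (Real.exp 1 - 1)/(Real.exp 1 + 1) := by
    calc Complex.abs (z * deriv f z / f z - 1)
        ≤ _ := htri
      _ ≤ r*(m+4*r+m*r^2)/((1-r^2)*(1+m*r+r^2))
          + r*(n+4*r+n*r^2)/((1-r^2)*(1+n*r+r^2)) + 2*r^2/(1-r^2) := by
          linarith [hApX, hAqX, hA0X]
      _ < _ := hXlt
  have hkey := log_sg hufinal
  have hrw : (1 + (z * deriv f z / f z - 1)) / (1 - (z * deriv f z / f z - 1))
      = (z * deriv f z / f z) / (2 - z * deriv f z / f z) := by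
    ring_nf
  rw [hrw] at hkey
  exact hkey
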